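/- Let N_e be a positive natural number and let X₁, …, X_{N_e} : ℝ² × ℝ → ℂ. Let A : ℝ² → ℝ² be an invertible linear map with determinant Δ ≠ 0 and let b ∈ ℝ². Let α > 0, β ≥ 0, γ ≥ 0 be real parameters, and define M_x(u) = (1/N_e)·Σᵢ Xᵢ(u), D_x(u) = (1/N_e)·Σᵢ |Xᵢ(u)|², S_x(u) = (1/N_e)·Σᵢ |Xᵢ(u) − M_x(u)|², and the canonical-view MACH filter h(u) = M_x(u)/(α + β·D_x(u) + γ·S_x(u)). Define the transformed training spectra X̂ᵢ(u_s, u₃) = exp(2πi·⟨b, (A⁻¹)ᵀ u_s⟩) · Xᵢ((A⁻¹)ᵀ u_s, u₃)/|Δ|, the corresponding quantities M̂_x, D̂_x, Ŝ_x, and the compensated filter ĥ(u) = M̂_x(u)/(α̂ + β̂·D̂_x(u) + γ̂·Ŝ_x(u)) with α̂ = α/|Δ|², β̂ = β, γ̂ = γ. Assume h and ĥ are integrable on ℝ² × ℝ, and let H and Ĥ denote their inverse Fourier transforms on ℝ² × ℝ. Then for every spatial point x_s ∈ ℝ² and every t ∈ ℝ, Ĥ(x_s, t) = |Δ|² ·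 H(A x_s + b, t). -/

import Mathlib

open scoped RealInnerProductSpace
open MeasureTheory

lemma aux_det_adjoint (f : EuclideanSpace ℝ (Fin 2) →ₗ[ℝ] EuclideanSpace ℝ (Fin 2)) :
    LinearMap.det (LinearMap.adjoint f) = LinearMap.det f := by
  let v := EuclideanSpace.basisFun (Fin 2) ℝ
  rw [← LinearMap.det_toMatrix v.toBasis (LinearMap.adjoint f),
    ← LinearMap.det_toMatrix v.toBasis f, LinearMap.toMatrix_adjoint,
    Matrix.det_conjTranspose, star_trivial]

lemma aux_det_prodMap (f : EuclideanSpace ℝ (Fin 2) →ₗ[ℝ] EuclideanSpace ℝ (Fin 2)) :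
    LinearMap.det (f.prodMap (LinearMap.id : ℝ →ₗ[ℝ] ℝ)) = LinearMap.det f := by
  let v₁ : Module.Basis (Fin 2) ℝ (EuclideanSpace ℝ (Fin 2)) := (EuclideanSpace.basisFun (Fin 2) ℝ).toBasis
  let v₂ : Module.Basis Unit ℝ ℝ := Module.Basis.singleton Unit ℝ
  rw [← LinearMap.det_toMatrix (v₁.prod v₂), LinearMap.toMatrix_prodMap v₁ v₂,
    Matrix.det_fromBlocks_zero₂₁, LinearMap.det_toMatrix, LinearMap.det_toMatrix,
    LinearMap.det_id, mul_one]

instance aux_inst : MeasureTheory.Measure.IsAddHaarMeasure (volume : Measure (EuclideanSpace ℝ (Fin 2) × ℝ)) :=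
  MeasureTheory.Measure.prod.instIsAddHaarMeasure volume volume

lemma aux_cov (T : (EuclideanSpace ℝ (Fin 2) × ℝ) →ₗ[ℝ] (EuclideanSpace ℝ (Fin 2) × ℝ))
    (hT0 : LinearMap.det T ≠ 0) (F : EuclideanSpace ℝ (Fin 2) × ℝ → ℂ) :
    ∫ u, F (T u) = |(LinearMap.det T)⁻¹| • ∫ v, F v := by
  let Teq : (EuclideanSpace ℝ (Fin 2) × ℝ) ≃ᵐ (EuclideanSpace ℝ (Fin 2) × ℝ) :=
    (T.equivOfDetNeZero hT0).toContinuousLinearEquiv.toHomeomorph.toMeasurableEquiv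
  have hco : ⇑Teq = ⇑T := rfl
  have h1 := MeasureTheory.integral_map_equiv (μ := volume) Teq F
  rw [hco] at h1
  rw [← h1, Measure.map_linearMap_addHaar_eq_smul_addHaar volume hT0, integral_smul_measure,
    ENNReal.toReal_ofReal (abs_nonneg _)]

theorem stmt_12 (Ne : ℕ) (hNe : 0 < Ne)
    (X : Fin Ne → EuclideanSpace ℝ (Fin 2) × ℝ → ℂ)
    (A : EuclideanSpace ℝ (Fin 2) ≃ₗ[ℝ] EuclideanSpace ℝ (Fin 2))
    (Δ : ℝ)
    (hΔ : LinearMap.det (A : EuclideanSpace ℝ (Fin 2) →ₗ[ℝ] EuclideanSpace ℝ (Fin 2)) = Δ)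
    (hΔ0 : Δ ≠ 0) (b : EuclideanSpace ℝ (Fin 2))
    (α β γ : ℝ) (hα : 0 < α) (hβ : 0 ≤ β) (hγ : 0 ≤ γ)
    (Mx : EuclideanSpace ℝ (Fin 2) × ℝ → ℂ)
    (hMx : ∀ u, Mx u = (1 / (Ne : ℂ)) * ∑ i, X i u)
    (Dx : EuclideanSpace ℝ (Fin 2) × ℝ → ℝ)
    (hDx : ∀ u, Dx u = (1 / (Ne : ℝ)) * ∑ i, ‖X i u‖ ^ 2)
    (Sx : EuclideanSpace ℝ (Fin 2) × ℝ → ℝ)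
    (hSx : ∀ u, Sx u = (1 / (Ne : ℝ)) * ∑ i, ‖X i u - Mx u‖ ^ 2)
    (h : EuclideanSpace ℝ (Fin 2) × ℝ → ℂ)
    (hh : ∀ u, h u = Mx u / ((α + β * Dx u + γ * Sx u : ℝ) : ℂ))
    (Xhat : Fin Ne → EuclideanSpace ℝ (Fin 2) × ℝ → ℂ)
    (hXhat : ∀ i, ∀ us : EuclideanSpace ℝ (Fin 2), ∀ u3 : ℝ,
      Xhat i (us, u3) =
        Complex.exp (2 * Real.pi * Complex.I *
          (⟪b, LinearMap.adjoint
            (A.symm : EuclideanSpace ℝ (Fin 2) →ₗ[ℝ] EuclideanSpace ℝ (Fin 2)) us⟫ : ℝ)) *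
        X i (LinearMap.adjoint
            (A.symm : EuclideanSpace ℝ (Fin 2) →ₗ[ℝ] EuclideanSpace ℝ (Fin 2)) us, u3) /
        ((|Δ| : ℝ) : ℂ))
    (Mxhat : EuclideanSpace ℝ (Fin 2) × ℝ → ℂ)
    (hMxhat : ∀ u, Mxhat u = (1 / (Ne : ℂ)) * ∑ i, Xhat i u)
    (Dxhat : EuclideanSpace ℝ (Fin 2) × ℝ → ℝ)
    (hDxhat : ∀ u, Dxhat u = (1 / (Ne : ℝ)) * ∑ i, ‖Xhat i u‖ ^ 2)
    (Sxhat : EuclideanSpace ℝ (Fin 2) × ℝ → ℝ)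
    (hSxhat : ∀ u, Sxhat u = (1 / (Ne : ℝ)) * ∑ i, ‖Xhat i u - Mxhat u‖ ^ 2)
    (αhat βhat γhat : ℝ)
    (hαhat : αhat = α / |Δ| ^ 2) (hβhat : βhat = β) (hγhat : γhat = γ)
    (hhat : EuclideanSpace ℝ (Fin 2) × ℝ → ℂ)
    (hhhat : ∀ u, hhat u = Mxhat u / ((αhat + βhat * Dxhat u + γhat * Sxhat u : ℝ) : ℂ))
    (hint : Integrable h) (hinthat : Integrable hhat)
    (H Hhat : EuclideanSpace ℝ (Fin 2) × ℝ → ℂ)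
    (hH : ∀ xs : EuclideanSpace ℝ (Fin 2), ∀ t : ℝ,
      H (xs, t) = ∫ u : EuclideanSpace ℝ (Fin 2) × ℝ,
        h u * Complex.exp (2 * Real.pi * Complex.I * ((⟪u.1, xs⟫ : ℝ) + u.2 * t)))
    (hHhat : ∀ xs : EuclideanSpace ℝ (Fin 2), ∀ t : ℝ,
      Hhat (xs, t) = ∫ u : EuclideanSpace ℝ (Fin 2) × ℝ,
        hhat u * Complex.exp (2 * Real.pi * Complex.I * ((⟪u.1, xs⟫ : ℝ) + u.2 * t))) :
    ∀ xs : EuclideanSpace ℝ (Fin 2), ∀ t : ℝ,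
      Hhat (xs, t) = ((|Δ| ^ 2 : ℝ) : ℂ) * H (A xs + b, t) := by
  
  intro xs t
  set B : EuclideanSpace ℝ (Fin 2) →ₗ[ℝ] EuclideanSpace ℝ (Fin 2) :=
    LinearMap.adjoint (A.symm : EuclideanSpace ℝ (Fin 2) →ₗ[ℝ] EuclideanSpace ℝ (Fin 2)) with hBdef
  have habsΔ : |Δ| ≠ 0 := abs_ne_zero.mpr hΔ0
  have hcΔ : ((|Δ| : ℝ) : ℂ) ≠ 0 := by exact_mod_cast habsΔ
  -- determinants
  have hdetB : LinearMap.det B = Δ⁻¹ := by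
    rw [hBdef, aux_det_adjoint, LinearEquiv.det_coe_symm, hΔ]
  set T : (EuclideanSpace ℝ (Fin 2) × ℝ) →ₗ[ℝ] (EuclideanSpace ℝ (Fin 2) × ℝ) :=
    B.prodMap (LinearMap.id : ℝ →ₗ[ℝ] ℝ) with hTdef
  have hdetT : LinearMap.det T = Δ⁻¹ := by rw [hTdef, aux_det_prodMap, hdetB]
  have hT0 : LinearMap.det T ≠ 0 := by rw [hdetT]; exact inv_ne_zero hΔ0
  -- modulus-one phases
  have hφabs : ∀ r : ℝ, ‖Complex.exp (2 * Real.pi * Complex.I * r)‖ = 1 := by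
    intro r
    rw [show (2 * Real.pi * Complex.I * (r : ℂ)) = ((2 * Real.pi * r : ℝ) : ℂ) * Complex.I by
      push_cast; ring, Complex.norm_exp_ofReal_mul_I]
  -- denominator positivity
  have hden : ∀ u, 0 < α + β * Dx u + γ * Sx u := by
    intro u
    have h1 : 0 ≤ Dx u := by rw [hDx]; positivity
    have h2 : 0 ≤ Sx u := by rw [hSx]; positivity
    have h3 := mul_nonneg hβ h1
    have h4 := mul_nonneg hγ h2
    linarith
  -- pointwise identity for hhat
  have key : ∀ us : EuclideanSpace ℝ (Fin 2), ∀ u3 : ℝ,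
      hhat (us, u3) = ((|Δ| : ℝ) : ℂ) *
        (Complex.exp (2 * Real.pi * Complex.I * ((⟪b, B us⟫ : ℝ) : ℂ)) * h (B us, u3)) := by
    intro us u3
    set v : EuclideanSpace ℝ (Fin 2) × ℝ := (B us, u3) with hv
    set φ : ℂ := Complex.exp (2 * Real.pi * Complex.I * ((⟪b, B us⟫ : ℝ) : ℂ)) with hφ
    have hφ1 : ‖φ‖ = 1 := hφabs _
    have hXh : ∀ i, Xhat i (us, u3) = φ * X i v / ((|Δ| : ℝ) : ℂ) := fun i => hXhat i us u3
    have hM : Mxhat (us, u3) = φ * Mx v / ((|Δ| : ℝ) : ℂ) := by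
      rw [hMxhat, hMx]
      simp only [hXh]
      rw [← Finset.sum_div, ← Finset.mul_sum]
      ring
    have hD : Dxhat (us, u3) = Dx v / |Δ| ^ 2 := by
      rw [hDxhat, hDx]
      have e1 : ∀ i, ‖Xhat i (us, u3)‖ ^ 2 = ‖X i v‖ ^ 2 / |Δ| ^ 2 := by
        intro i
        rw [hXh, norm_div, norm_mul, hφ1, one_mul, Complex.norm_real, Real.norm_eq_abs, abs_abs, div_pow]
      simp only [e1]
      rw [← Finset.sum_div]
      ring
    have hS : Sxhat (us, u3) = Sx v / |Δ| ^ 2 := by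
      rw [hSxhat, hSx]
      have e1 : ∀ i, ‖Xhat i (us, u3) - Mxhat (us, u3)‖ ^ 2
          = ‖X i v - Mx v‖ ^ 2 / |Δ| ^ 2 := by
        intro i
        rw [hXh, hM, show φ * X i v / ((|Δ| : ℝ) : ℂ) - φ * Mx v / ((|Δ| : ℝ) : ℂ)
          = φ * (X i v - Mx v) / ((|Δ| : ℝ) : ℂ) by ring,
          norm_div, norm_mul, hφ1, one_mul, Complex.norm_real, Real.norm_eq_abs, abs_abs, div_pow]
      simp only [e1]
      rw [← Finset.sum_div]
      ring
    have hdd : αhat + βhat * Dxhat (us, u3) + γhat * Sxhat (us, u3)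
        = (α + β * Dx v + γ * Sx v) / |Δ| ^ 2 := by
      rw [hαhat, hβhat, hγhat, hD, hS]; ring
    rw [hhhat, hh, hM, hdd]
    have hd : ((α + β * Dx v + γ * Sx v : ℝ) : ℂ) ≠ 0 := by
      exact_mod_cast (hden v).ne'
    push_cast
    push_cast at hd
    field_simp
  -- inner product identity
  have hip : ∀ us : EuclideanSpace ℝ (Fin 2),
      (⟪b, B us⟫ : ℝ) + ⟪us, xs⟫ = ⟪B us, A xs + b⟫ := by
    intro us
    rw [inner_add_right, hBdef, LinearMap.adjoint_inner_left]
    have : (A.symm : EuclideanSpace ℝ (Fin 2) →ₗ[ℝ] EuclideanSpace ℝ (Fin 2)) (A xs) = xs := by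
      simp
    rw [this, real_inner_comm b]
    ring
  -- integrand identity
  have hFT : ∀ u : EuclideanSpace ℝ (Fin 2) × ℝ,
      hhat u * Complex.exp (2 * Real.pi * Complex.I * ((⟪u.1, xs⟫ : ℝ) + u.2 * t))
      = ((|Δ| : ℝ) : ℂ) * ((fun v : EuclideanSpace ℝ (Fin 2) × ℝ =>
          h v * Complex.exp (2 * Real.pi * Complex.I * ((⟪v.1, A xs + b⟫ : ℝ) + v.2 * t))) (T u)) := by
    rintro ⟨us, u3⟩
    have hTu : T (us, u3) = (B us, u3) := rfl
    rw [hTu, key us u3]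
    simp only
    have hee : Complex.exp (2 * Real.pi * Complex.I * ((⟪b, B us⟫ : ℝ) : ℂ)) *
        Complex.exp (2 * Real.pi * Complex.I * (((⟪us, xs⟫ : ℝ) : ℂ) + (u3 : ℂ) * (t : ℂ))) =
        Complex.exp (2 * Real.pi * Complex.I * (((⟪B us, A xs + b⟫ : ℝ) : ℂ) + (u3 : ℂ) * (t : ℂ))) := by
      rw [← Complex.exp_add, ← hip us]
      push_cast
      ring_nf
    linear_combination (((|Δ| : ℝ) : ℂ) * h (B us, u3)) * hee
  -- put it together
  rw [hHhat xs t, hH (A xs + b) t]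
  calc (∫ u : EuclideanSpace ℝ (Fin 2) × ℝ,
        hhat u * Complex.exp (2 * Real.pi * Complex.I * ((⟪u.1, xs⟫ : ℝ) + u.2 * t)))
      = ∫ u : EuclideanSpace ℝ (Fin 2) × ℝ, ((|Δ| : ℝ) : ℂ) * ((fun v : EuclideanSpace ℝ (Fin 2) × ℝ =>
          h v * Complex.exp (2 * Real.pi * Complex.I * ((⟪v.1, A xs + b⟫ : ℝ) + v.2 * t))) (T u)) := by
        exact integral_congr_ae (Filter.Eventually.of_forall hFT)
    _ = ((|Δ| : ℝ) : ℂ) * ∫ u : EuclideanSpace ℝ (Fin 2) × ℝ, ((fun v : EuclideanSpace ℝ (Fin 2) × ℝ =>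
          h v * Complex.exp (2 * Real.pi * Complex.I * ((⟪v.1, A xs + b⟫ : ℝ) + v.2 * t))) (T u)) := by
        rw [integral_const_mul]
    _ = ((|Δ| : ℝ) : ℂ) * (|(LinearMap.det T)⁻¹| • ∫ v : EuclideanSpace ℝ (Fin 2) × ℝ,
          h v * Complex.exp (2 * Real.pi * Complex.I * ((⟪v.1, A xs + b⟫ : ℝ) + v.2 * t))) := by
        exact congrArg (fun z => ((|Δ| : ℝ) : ℂ) * z) (aux_cov T hT0 (fun v : EuclideanSpace ℝ (Fin 2) × ℝ =>
          h v * Complex.exp (2 * Real.pi * Complex.I * ((⟪v.1, A xs + b⟫ : ℝ) + v.2 * t))))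
    _ = ((|Δ| ^ 2 : ℝ) : ℂ) * ∫ v : EuclideanSpace ℝ (Fin 2) × ℝ,
          h v * Complex.exp (2 * Real.pi * Complex.I * ((⟪v.1, A xs + b⟫ : ℝ) + v.2 * t)) := by
        rw [hdetT, inv_inv, Complex.real_smul]
        push_cast
        ring
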